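/- Let (U,V) be a cotorsion pair on an extriangulated category B, let A, B ∈ H = B^+ ∩ B^-, and let C ↣ A ↠ B be a conflation in B. If the image f̲ in the heart H̲ of the deflation f: A → B is an epimorphism in H̲, then C ∈ B^-. -/

import Mathlib

namespace ExtriHearts

open CategoryTheory CategoryTheory.Limits Opposite

attribute [local instance] CategoryTheory.Limits.hasBinaryBiproducts_of_finite_biproducts

universe v u v₂ u₂

section IdealQuotient

variable {D : Type u₂} [Category.{v₂} D] [Preadditive D]

/-- The subgroup of morphisms `X ⟶ Y` generated by those factoring through an object of `W`. -/
def wIdeal (W : Set D) (X Y : D) : AddSubgroup (X ⟶ Y) :=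
  AddSubgroup.closure {f : X ⟶ Y | ∃ Z ∈ W, ∃ p : X ⟶ Z, ∃ q : Z ⟶ Y, f = p ≫ q}

/-- The hom relation on `D` identifying morphisms whose difference lies in the ideal
generated by morphisms factoring through an object of `W`.  (For an additively closed
subcategory `W` this is the usual relation "`f - g` factors through an object of `W`".) -/
def wRel (W : Set D) : HomRel D := fun {X Y} f g => f - g ∈ wIdeal W X Y

lemma comp_left_mem_wIdeal (W : Set D) {X Y Z : D} (f : X ⟶ Y) {g : Y ⟶ Z}
    (hg : g ∈ wIdeal W Y Z) : f ≫ g ∈ wIdeal W X Z := by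
  have hle : wIdeal W Y Z ≤ (wIdeal W X Z).comap (Preadditive.leftComp Z f) := by
    rw [wIdeal, AddSubgroup.closure_le]
    rintro g ⟨Z₀, hZ₀, p, q, rfl⟩
    exact AddSubgroup.subset_closure ⟨Z₀, hZ₀, f ≫ p, q, by
      simp [Preadditive.leftComp]⟩
  simpa [Preadditive.leftComp] using hle hg

lemma comp_right_mem_wIdeal (W : Set D) {X Y Z : D} {f : X ⟶ Y} (g : Y ⟶ Z)
    (hf : f ∈ wIdeal W X Y) : f ≫ g ∈ wIdeal W X Z := by
  have hle : wIdeal W X Y ≤ (wIdeal W X Z).comap (Preadditive.rightComp X g) := by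
    rw [wIdeal, AddSubgroup.closure_le]
    rintro f ⟨Z₀, hZ₀, p, q, rfl⟩
    exact AddSubgroup.subset_closure ⟨Z₀, hZ₀, p, q ≫ g, by
      simp [Preadditive.rightComp]⟩
  simpa [Preadditive.rightComp] using hle hf

instance wRel_congruence (W : Set D) : Congruence (wRel W) where
  equivalence :=
    { refl := fun f => by
        show f - f ∈ wIdeal W _ _
        simp only [sub_self]
        exact zero_mem _
      symm := fun {f g} h => by
        have h' : f - g ∈ wIdeal W _ _ := h
        show g - f ∈ wIdeal W _ _
        simpa only [neg_sub] using neg_mem h'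
      trans := fun {f g h} h₁ h₂ => by
        have h₁' : f - g ∈ wIdeal W _ _ := h₁
        have h₂' : g - h ∈ wIdeal W _ _ := h₂
        show f - h ∈ wIdeal W _ _
        simpa only [sub_add_sub_cancel] using add_mem h₁' h₂' }
  comp_left := fun {X Y Z} f {g g'} h => by
    have h' : g - g' ∈ wIdeal W _ _ := h
    show f ≫ g - f ≫ g' ∈ wIdeal W _ _
    simpa only [← Preadditive.comp_sub] using comp_left_mem_wIdeal W f h'
  comp_right := fun {X Y Z} {f f'} g h => by
    have h' : f - f' ∈ wIdeal W _ _ := h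
    show f ≫ g - f' ≫ g ∈ wIdeal W _ _
    simpa only [← Preadditive.sub_comp] using comp_right_mem_wIdeal W g h'

/-- The quotient of a preadditive category by (the ideal generated by) the morphisms factoring
through a class of objects `W`. -/
abbrev QuotCat (W : Set D) := CategoryTheory.Quotient (wRel W)

/-- The canonical quotient functor. -/
abbrev toQuot (W : Set D) : D ⥤ QuotCat W := Quotient.functor _

instance quotCatPreadditive (W : Set D) : Preadditive (QuotCat W) :=
  Quotient.preadditive _ (fun X Y f₁ f₂ g₁ g₂ h₁ h₂ => by
    have h₁' : f₁ - f₂ ∈ wIdeal W X Y := h₁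
    have h₂' : g₁ - g₂ ∈ wIdeal W X Y := h₂
    show f₁ + g₁ - (f₂ + g₂) ∈ wIdeal W X Y
    have heq : f₁ + g₁ - (f₂ + g₂) = f₁ - f₂ + (g₁ - g₂) := by abel
    rw [heq]
    exact add_mem h₁' h₂')

end IdealQuotient

section ExtCat

/-- The data of an additive `Ab`-valued bifunctor together with a realization predicate:
`realize δ x y` means that the 3-term sequence `A --x--> X --y--> C` realizes the
`E`-extension `δ ∈ E(C,A)`, i.e. belongs to the equivalence class `s(δ)`. -/
structure PreExtStruct (B : Type u) [Category.{v} B] [Preadditive B] where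
  /-- The additive bifunctor `E : Bᵒᵖ × B → Ab`. -/
  E : Bᵒᵖ ⥤ B ⥤ AddCommGrpCat.{v}

namespace PreExtStruct

variable {B : Type u} [Category.{v} B] [Preadditive B]

/-- The abelian group `E(C,A)` of `E`-extensions of `C` by `A`. -/
abbrev Ext (σ : PreExtStruct B) (C A : B) : AddCommGrpCat.{v} := (σ.E.obj (op C)).obj A

/-- `a_* δ`, the pushforward of an `E`-extension along `a : A ⟶ A'`. -/
def push (σ : PreExtStruct B) {C A A' : B} (a : A ⟶ A') (δ : σ.Ext C A) : σ.Ext C A' :=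
  (σ.E.obj (op C)).map a δ

/-- `c^* δ`, the pullback of an `E`-extension along `c : C' ⟶ C`. -/
def pull (σ : PreExtStruct B) {C' C A : B} (c : C' ⟶ C) (δ : σ.Ext C A) : σ.Ext C' A :=
  (σ.E.map c.op).app A δ

/-- The direct sum `δ ⊕ δ'` of two `E`-extensions, i.e. the element of
`E(C ⊞ C', A ⊞ A')` corresponding to `(δ, 0, 0, δ')`. -/
noncomputable def sumExt (σ : PreExtStruct B) [HasBinaryBiproducts B] {C C' A A' : B}
    (δ : σ.Ext C A) (δ' : σ.Ext C' A') : σ.Ext (C ⊞ C') (A ⊞ A') :=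
  σ.push biprod.inl (σ.pull biprod.fst δ) + σ.push biprod.inr (σ.pull biprod.snd δ')

end PreExtStruct

/-- An *extriangulated category* structure `(E, s)` on an additive category `B`, consisting of
an additive bifunctor `E : Bᵒᵖ × B → Ab` and an additive realization `s` of `E` (encoded by the
predicate `realize`), subject to the axioms (ET1), (ET2), (ET3), (ET3)ᵒᵖ, (ET4), (ET4)ᵒᵖ of
Nakaoka–Palu. -/
structure ExtStruct (B : Type u) [Category.{v} B] [Preadditive B] [HasFiniteBiproducts B]
    extends PreExtStruct B where
  /-- (ET1) `E` is additive in the second variable. -/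
  additive_fst : ∀ Cop : Bᵒᵖ, (E.obj Cop).Additive
  /-- (ET1) `E` is additive in the first variable. -/
  additive_snd : ∀ A : B, (E.flip.obj A).Additive
  /-- `realize δ x y` means the sequence `A --x--> X --y--> C` realizes `δ`, i.e. it belongs to
  the equivalence class `s(δ)`. -/
  realize : ∀ ⦃A C : B⦄, toPreExtStruct.Ext C A → ∀ ⦃X : B⦄, (A ⟶ X) → (X ⟶ C) → Prop
  /-- Every `E`-extension is realized by some sequence. -/
  realize_ex : ∀ ⦃A C : B⦄ (δ : toPreExtStruct.Ext C A),
      ∃ (X : B) (x : A ⟶ X) (y : X ⟶ C), realize δ x y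
  /-- `s(δ)` is closed under the equivalence of sequences. -/
  realize_iso : ∀ ⦃A C X X' : B⦄ (δ : toPreExtStruct.Ext C A) (x : A ⟶ X) (y : X ⟶ C)
      (b : X ≅ X'), realize δ x y → realize δ (x ≫ b.hom) (b.inv ≫ y)
  /-- Any two realizations of `δ` are equivalent sequences. -/
  realize_unique : ∀ ⦃A C X X' : B⦄ (δ : toPreExtStruct.Ext C A) (x : A ⟶ X) (y : X ⟶ C)
      (x' : A ⟶ X') (y' : X' ⟶ C), realize δ x y → realize δ x' y' →
      ∃ b : X ≅ X', x ≫ b.hom = x' ∧ b.hom ≫ y' = y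
  /-- (ET2)(∗) Any morphism of `E`-extensions is realized by a morphism of sequences. -/
  realize_map : ∀ ⦃A C A' C' X X' : B⦄ (δ : toPreExtStruct.Ext C A) (δ' : toPreExtStruct.Ext C' A')
      (x : A ⟶ X) (y : X ⟶ C) (x' : A' ⟶ X') (y' : X' ⟶ C') (a : A ⟶ A') (c : C ⟶ C'),
      realize δ x y → realize δ' x' y' →
      toPreExtStruct.push a δ = toPreExtStruct.pull c δ' →
      ∃ b : X ⟶ X', x ≫ b = a ≫ x' ∧ y ≫ c = b ≫ y'
  /-- (ET2)(i) The split extension is realized by the split sequence. -/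
  realize_zero : ∀ A C : B,
      realize (0 : toPreExtStruct.Ext C A) (biprod.inl : A ⟶ A ⊞ C) (biprod.snd : A ⊞ C ⟶ C)
  /-- (ET2)(ii) Realization is additive. -/
  realize_sum : ∀ ⦃A C A' C' X X' : B⦄ (δ : toPreExtStruct.Ext C A)
      (δ' : toPreExtStruct.Ext C' A') (x : A ⟶ X) (y : X ⟶ C) (x' : A' ⟶ X') (y' : X' ⟶ C'),
      realize δ x y → realize δ' x' y' →
      realize (toPreExtStruct.sumExt δ δ') (biprod.map x x') (biprod.map y y')
  /-- (ET3) -/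
  et3 : ∀ ⦃A C A' C' X X' : B⦄ (δ : toPreExtStruct.Ext C A) (δ' : toPreExtStruct.Ext C' A')
      (x : A ⟶ X) (y : X ⟶ C) (x' : A' ⟶ X') (y' : X' ⟶ C'),
      realize δ x y → realize δ' x' y' → ∀ (a : A ⟶ A') (b : X ⟶ X'), x ≫ b = a ≫ x' →
      ∃ c : C ⟶ C', toPreExtStruct.push a δ = toPreExtStruct.pull c δ' ∧ y ≫ c = b ≫ y'
  /-- (ET3)ᵒᵖ -/
  et3op : ∀ ⦃A C A' C' X X' : B⦄ (δ : toPreExtStruct.Ext C A) (δ' : toPreExtStruct.Ext C' A')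
      (x : A ⟶ X) (y : X ⟶ C) (x' : A' ⟶ X') (y' : X' ⟶ C'),
      realize δ x y → realize δ' x' y' → ∀ (b : X ⟶ X') (c : C ⟶ C'), y ≫ c = b ≫ y' →
      ∃ a : A ⟶ A', toPreExtStruct.push a δ = toPreExtStruct.pull c δ' ∧ x ≫ b = a ≫ x'
  /-- (ET4) -/
  et4 : ∀ ⦃A B₀ D C F : B⦄ (δ : toPreExtStruct.Ext D A) (f : A ⟶ B₀) (f' : B₀ ⟶ D)
      (δ' : toPreExtStruct.Ext F B₀) (g : B₀ ⟶ C) (g' : C ⟶ F),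
      realize δ f f' → realize δ' g g' →
      ∃ (E₀ : B) (d : D ⟶ E₀) (e : E₀ ⟶ F) (h' : C ⟶ E₀) (δ'' : toPreExtStruct.Ext E₀ A),
        g ≫ h' = f' ≫ d ∧ h' ≫ e = g' ∧
        realize δ'' (f ≫ g) h' ∧ realize (toPreExtStruct.push f' δ') d e ∧
        toPreExtStruct.pull d δ'' = δ ∧ toPreExtStruct.push f δ'' = toPreExtStruct.pull e δ'
  /-- (ET4)ᵒᵖ -/
  et4op : ∀ ⦃F C B₀ D A : B⦄ (δ' : toPreExtStruct.Ext B₀ F) (s : F ⟶ C) (t : C ⟶ B₀)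
      (δ : toPreExtStruct.Ext A D) (u : D ⟶ B₀) (v : B₀ ⟶ A),
      realize δ' s t → realize δ u v →
      ∃ (E₀ : B) (e : F ⟶ E₀) (d : E₀ ⟶ D) (m : E₀ ⟶ C) (δ'' : toPreExtStruct.Ext A E₀),
        m ≫ t = d ≫ u ∧ e ≫ m = s ∧
        realize δ'' m (t ≫ v) ∧ realize (toPreExtStruct.pull u δ') e d ∧
        toPreExtStruct.push d δ'' = δ ∧
        toPreExtStruct.pull v δ'' = toPreExtStruct.push e δ'

namespace ExtStruct

variable {B : Type u} [Category.{v} B] [Preadditive B] [HasFiniteBiproducts B] (σ : ExtStruct B)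

/-- A sequence `A --x--> X --y--> C` is a conflation if it realizes some `E`-extension. -/
def Conflation {A X C : B} (x : A ⟶ X) (y : X ⟶ C) : Prop :=
  ∃ δ : σ.Ext C A, σ.realize δ x y

/-- `Cone(D₁, D₂)`: objects `X` admitting a conflation `D₁ ↣ D₂ ↠ X`. -/
def Cone (D₁ D₂ : Set B) : Set B :=
  {X | ∃ (A Y : B) (f : A ⟶ Y) (g : Y ⟶ X), A ∈ D₁ ∧ Y ∈ D₂ ∧ σ.Conflation f g}

/-- `CoCone(D₁, D₂)`: objects `X` admitting a conflation `X ↣ D₁ ↠ D₂`. -/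
def CoCone (D₁ D₂ : Set B) : Set B :=
  {X | ∃ (Y C : B) (f : X ⟶ Y) (g : Y ⟶ C), Y ∈ D₁ ∧ C ∈ D₂ ∧ σ.Conflation f g}

/-- `D₁ ∗ D₂`: objects `X` admitting a conflation `D₁ ↣ X ↠ D₂`. -/
def star (D₁ D₂ : Set B) : Set B :=
  {X | ∃ (A C : B) (f : A ⟶ X) (g : X ⟶ C), A ∈ D₁ ∧ C ∈ D₂ ∧ σ.Conflation f g}

/-- `add(D₁ ∗ D₂)`: direct summands of objects of `D₁ ∗ D₂`. -/
def addStar (D₁ D₂ : Set B) : Set B :=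
  {X | ∃ Y ∈ σ.star D₁ D₂, ∃ (s : X ⟶ Y) (r : Y ⟶ X), s ≫ r = 𝟙 X}

/-- An object `P` is projective if `E(P, −) = 0`. -/
def IsProj (P : B) : Prop := ∀ (A : B) (δ : σ.Ext P A), δ = 0

/-- An object `I` is injective if `E(−, I) = 0`. -/
def IsInj (I : B) : Prop := ∀ (C : B) (δ : σ.Ext C I), δ = 0

/-- The class of projective objects. -/
def projs : Set B := {P | σ.IsProj P}

/-- `B` has enough projectives: every object admits a deflation from a projective. -/
def EnoughProj : Prop :=
  ∀ X : B, ∃ (P K : B) (i : K ⟶ P) (p : P ⟶ X), σ.IsProj P ∧ σ.Conflation i p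

/-- `B` has enough injectives: every object admits an inflation into an injective. -/
def EnoughInj : Prop :=
  ∀ X : B, ∃ (I C : B) (i : X ⟶ I) (p : I ⟶ C), σ.IsInj I ∧ σ.Conflation i p

end ExtStruct

/-- A full additive subcategory (given as a class of objects), closed under isomorphisms and
direct summands. -/
structure AddClosed {B : Type u} [Category.{v} B] [Preadditive B] [HasFiniteBiproducts B]
    (U : Set B) : Prop where
  zero_mem : ∀ Z : B, IsZero Z → Z ∈ U
  biprod_mem : ∀ X Y : B, X ∈ U → Y ∈ U → (X ⊞ Y) ∈ U
  summand_mem : ∀ X Y : B, Y ∈ U → ∀ (s : X ⟶ Y) (r : Y ⟶ X), s ≫ r = 𝟙 X → X ∈ U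

namespace ExtStruct

variable {B : Type u} [Category.{v} B] [Preadditive B] [HasFiniteBiproducts B] (σ : ExtStruct B)

/-- A (complete) cotorsion pair `(U, V)` on an extriangulated category. -/
structure IsCotorsionPair (U V : Set B) : Prop where
  addU : AddClosed U
  addV : AddClosed V
  ext_vanish : ∀ ⦃X : B⦄, X ∈ U → ∀ ⦃Y : B⦄, Y ∈ V → ∀ δ : σ.Ext X Y, δ = 0
  resolve : ∀ X : B, ∃ (V₀ U₀ : B) (f : V₀ ⟶ U₀) (g : U₀ ⟶ X),
      V₀ ∈ V ∧ U₀ ∈ U ∧ σ.Conflation f g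
  coresolve : ∀ X : B, ∃ (V₀ U₀ : B) (f : X ⟶ V₀) (g : V₀ ⟶ U₀),
      V₀ ∈ V ∧ U₀ ∈ U ∧ σ.Conflation f g

/-- A twin cotorsion pair `((S,T), (U,V))`. -/
structure IsTwinCotorsionPair (S T U V : Set B) : Prop where
  fst : σ.IsCotorsionPair S T
  snd : σ.IsCotorsionPair U V
  ext_SV : ∀ ⦃X : B⦄, X ∈ S → ∀ ⦃Y : B⦄, Y ∈ V → ∀ δ : σ.Ext X Y, δ = 0

section Twin

variable (S T U V : Set B)

/-- `B⁺ = Cone(V, W)` for the core `W = T ∩ U` of a twin cotorsion pair. -/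
def tPos : Set B := σ.Cone V (T ∩ U)

/-- `B⁻ = CoCone(W, S)` for the core `W = T ∩ U` of a twin cotorsion pair. -/
def tNeg : Set B := σ.CoCone (T ∩ U) S

/-- The class of objects of the heart `H = B⁺ ∩ B⁻` of a twin cotorsion pair. -/
def tHeartSet : Set B := σ.tPos T U V ∩ σ.tNeg S T U

/-- The heart `H/W` of a twin cotorsion pair, as a full subcategory of the quotient
category `B/W`. -/
abbrev THeart := ObjectProperty.FullSubcategory (fun X : QuotCat (T ∩ U : Set B) => X.as ∈ σ.tHeartSet S T U V)


/-- A *reflection sequence* for `B₀`: a conflation `B₀ ↣ Z ↠ S₀` with `Z ∈ B⁺`, `S₀ ∈ S`,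
such that `z^* : E(Z, V₀) → E(B₀, V₀)` is surjective for every `V₀ ∈ V`. -/
def IsReflectionSeq {B₀ Z S₀ : B} (z : B₀ ⟶ Z) (w : Z ⟶ S₀) : Prop :=
  Z ∈ σ.tPos T U V ∧ S₀ ∈ S ∧ σ.Conflation z w ∧
    ∀ ⦃V₀ : B⦄, V₀ ∈ V → Function.Surjective (fun δ : σ.Ext Z V₀ => σ.pull z δ)

/-- A *coreflection sequence* for `B₀`: a conflation `V₀ ↣ X ↠ B₀` with `X ∈ B⁻`, `V₀ ∈ V`,
such that `x_* : E(S₀, X) → E(S₀, B₀)` is surjective for every `S₀ ∈ S`. -/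
def IsCoreflectionSeq {V₀ X B₀ : B} (v : V₀ ⟶ X) (x : X ⟶ B₀) : Prop :=
  X ∈ σ.tNeg S T U ∧ V₀ ∈ V ∧ σ.Conflation v x ∧
    ∀ ⦃S₀ : B⦄, S₀ ∈ S → Function.Surjective (fun δ : σ.Ext S₀ X => σ.push x δ)

end Twin

section Single

variable (U V : Set B)

/-- `B⁺` for a single cotorsion pair `(U,V)`, with core `W = U ∩ V`. -/
def sPos : Set B := σ.Cone V (U ∩ V)

/-- `B⁻` for a single cotorsion pair `(U,V)`, with core `W = U ∩ V`. -/
def sNeg : Set B := σ.CoCone (U ∩ V) U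

/-- The class of objects of the heart of a single cotorsion pair. -/
def sHeartSet : Set B := σ.sPos U V ∩ σ.sNeg U V

/-- The heart `H/W` of a cotorsion pair `(U,V)`, a full subcategory of `B/W`, `W = U ∩ V`. -/
abbrev SHeart := ObjectProperty.FullSubcategory (fun X : QuotCat (U ∩ V : Set B) => X.as ∈ σ.sHeartSet U V)

/-- The inclusion of the heart into the quotient category `B/W`. -/
abbrev sHeartIncl : σ.SHeart U V ⥤ QuotCat (U ∩ V : Set B) := ObjectProperty.ι _

/-- The kernel `K = add(U ∗ V)` of a cotorsion pair. -/
def kernelSet : Set B := σ.addStar U V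

/-- The coheart `C = ⊥₁K` of a cotorsion pair. -/
def coheart : Set B := {X | ∀ ⦃K : B⦄, K ∈ σ.kernelSet U V → ∀ δ : σ.Ext X K, δ = 0}


/-- An object of the heart determined by an object of `B` lying in `B⁺ ∩ B⁻`. -/
def sHeartObj {X : B} (hX : X ∈ σ.sHeartSet U V) : σ.SHeart U V :=
  ⟨(toQuot (U ∩ V : Set B)).obj X, hX⟩

/-- The image in the heart of a morphism of `B` between objects of `B⁺ ∩ B⁻`. -/
def sHeartHom {X Y : B} (hX : X ∈ σ.sHeartSet U V) (hY : Y ∈ σ.sHeartSet U V) (f : X ⟶ Y) :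
    σ.sHeartObj U V hX ⟶ σ.sHeartObj U V hY :=
  ObjectProperty.homMk ((toQuot (U ∩ V : Set B)).map f)

end Single

end ExtStruct

end ExtCat

section More

variable {B : Type u} [Category.{v} B] [Preadditive B] [HasFiniteBiproducts B]

namespace ExtStruct

variable (σ : ExtStruct B)

/-- `Ω D₀ = CoCone(P, D₀)`, the syzygy class of a class of objects `D₀`. -/
def omegaSet (D₀ : Set B) : Set B := σ.CoCone σ.projs D₀

/-- A choice of iterated syzygies of `X`: `Z 0 = X` and for each `i` there is a conflation
`Z (i+1) ↣ P ↠ Z i` with `P` projective. -/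
def SyzygyChain (X : B) (Z : ℕ → B) : Prop :=
  Z 0 = X ∧ ∀ i : ℕ, ∃ (P : B) (f : Z (i + 1) ⟶ P) (g : P ⟶ Z i),
    σ.IsProj P ∧ σ.Conflation f g

/-- A choice of iterated cosyzygies of `Y`: `Z 0 = Y` and for each `i` there is a conflation
`Z i ↣ I ↠ Z (i+1)` with `I` injective. -/
def CosyzygyChain (Y : B) (Z : ℕ → B) : Prop :=
  Z 0 = Y ∧ ∀ i : ℕ, ∃ (I : B) (f : Z i ⟶ I) (g : I ⟶ Z (i + 1)),
    σ.IsInj I ∧ σ.Conflation f g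

/-- Vanishing of the higher extension group `E^{i+1}(X, Y) = E(X, Σ^i Y)`, expressed via
cosyzygy chains.  (`hExtVanish σ X Y 0` is the vanishing of `E(X,Y)` itself.) -/
def hExtVanish (X Y : B) (i : ℕ) : Prop :=
  ∀ Z : ℕ → B, σ.CosyzygyChain Y Z → ∀ δ : σ.Ext X (Z i), δ = 0

/-- `Σ^j D₀`: the class of `j`-th cosyzygies of objects of `D₀`. -/
def sigmaSet (j : ℕ) (D₀ : Set B) : Set B :=
  {X | ∃ Y ∈ D₀, ∃ Z : ℕ → B, σ.CosyzygyChain Y Z ∧ Z j = X}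

/-- An `n`-cluster tilting subcategory of an extriangulated category:
it is functorially finite, and `X ∈ M` iff `E^i(X, M) = 0` for `1 ≤ i ≤ n - 1`,
iff `E^i(M, X) = 0` for `1 ≤ i ≤ n - 1`. -/
structure IsNClusterTilting (n : ℕ) (M : Set B) : Prop where
  contravariantly_finite : ∀ X : B, ∃ M₀ ∈ M, ∃ f : M₀ ⟶ X,
      ∀ M₁ ∈ M, ∀ g : M₁ ⟶ X, ∃ h : M₁ ⟶ M₀, h ≫ f = g
  covariantly_finite : ∀ X : B, ∃ M₀ ∈ M, ∃ f : X ⟶ M₀,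
      ∀ M₁ ∈ M, ∀ g : X ⟶ M₁, ∃ h : M₀ ⟶ M₁, f ≫ h = g
  mem_iff_vanish_left : ∀ X : B,
      X ∈ M ↔ ∀ i : ℕ, i ≤ n - 2 → ∀ Y ∈ M, σ.hExtVanish X Y i
  mem_iff_vanish_right : ∀ X : B,
      X ∈ M ↔ ∀ i : ℕ, i ≤ n - 2 → ∀ Y ∈ M, σ.hExtVanish Y X i

/-- `mlev σ M k` is the subcategory `M_{k+1}` of the paper: `M_1 = M` and
`M_{ℓ} = Cone(M_{ℓ-1}, M)`. -/
def mlev (M : Set B) : ℕ → Set B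
  | 0 => M
  | (k + 1) => σ.Cone (mlev M k) M

end ExtStruct

section Reflectors

variable (W P N : Set B)

/-- The data of a reflection functor `σ⁺` onto the objects of `B⁺` (given by the class `P`),
i.e. a left adjoint of the inclusion of the full subcategory of `B/W` on `P` in the bijection
formulation: composing with the unit `B → σ⁺B` gives bijections
`(σ⁺X ⟶ Y) ≃ (X ⟶ Y)` for all `Y` lying in `P`. -/
structure ReflectorData where
  σp : QuotCat W ⥤ QuotCat W
  mem : ∀ X : QuotCat W, (σp.obj X).as ∈ P
  unit : 𝟭 (QuotCat W) ⟶ σp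
  bij : ∀ (X Y : QuotCat W), Y.as ∈ P →
      Function.Bijective (fun g : (σp.obj X ⟶ Y) => unit.app X ≫ g)

/-- The data of a coreflection functor `σ⁻` onto the objects of `B⁻` (given by the class `N`). -/
structure CoreflectorData where
  σm : QuotCat W ⥤ QuotCat W
  mem : ∀ X : QuotCat W, (σm.obj X).as ∈ N
  counit : σm ⟶ 𝟭 (QuotCat W)
  bij : ∀ (X Y : QuotCat W), X.as ∈ N →
      Function.Bijective (fun g : (X ⟶ σm.obj Y) => g ≫ counit.app Y)

end Reflectors

namespace ExtStruct

variable (σ : ExtStruct B)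

/-- The data of the cohomological functor `H = σ⁻ ∘ σ⁺ ∘ π : B → H` associated to a cotorsion
pair `(U, V)`: reflection and coreflection functors together with a functor `H` to the heart
which is isomorphic to `σ⁻ ∘ σ⁺ ∘ π` after composition with the inclusion of the heart. -/
structure HeartFunctorData (U V : Set B) where
  refl : ReflectorData (B := B) (U ∩ V) (σ.sPos U V)
  corefl : CoreflectorData (B := B) (U ∩ V) (σ.sNeg U V)
  H : B ⥤ σ.SHeart U V
  iso : (H ⋙ σ.sHeartIncl U V) ≅ (toQuot (U ∩ V : Set B) ⋙ refl.σp ⋙ corefl.σm)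

end ExtStruct

section Mod

variable (D : Type u₂) [Category.{v₂} D] [Preadditive D]

/-- A coherent (finitely presented) functor `Dᵒᵖ ⥤ Ab`: one admitting an exact presentation
`Hom(−,X) → Hom(−,Y) → F → 0`. -/
def IsCoherent (F : Dᵒᵖ ⥤ AddCommGrpCat.{v₂}) : Prop :=
  ∃ (X Y : D) (f : X ⟶ Y) (η : preadditiveYoneda.obj Y ⟶ F),
    (∀ A : D, Function.Surjective (η.app (op A))) ∧
    (∀ (A : D) (g : A ⟶ Y), η.app (op A) g = 0 ↔ ∃ h : A ⟶ X, h ≫ f = g)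

/-- `mod D`: the category of coherent functors `Dᵒᵖ ⥤ Ab`. -/
abbrev ModCat := ObjectProperty.FullSubcategory (fun F : Dᵒᵖ ⥤ AddCommGrpCat.{v₂} => IsCoherent D F)

end Mod

/-- The additive quotient `C/P` of the full subcategory of `B` on a class `C₀` of objects by
(the ideal of) morphisms factoring through objects satisfying `P₀`. -/
abbrev StableCat (C₀ P₀ : Set B) :=
  QuotCat (D := ObjectProperty.FullSubcategory (fun X : B => X ∈ C₀)) {Z | Z.obj ∈ P₀}

end More

section Statement9Aux

open CategoryTheory.Limits

namespace ExtStruct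

variable {B : Type u} [Category.{v} B] [Preadditive B] [HasFiniteBiproducts B]
variable (σ : ExtStruct B)

/-! ### Functoriality of `E` -/

lemma pull_comp {C' C'' C A : B} (c₁ : C' ⟶ C'') (c₂ : C'' ⟶ C) (δ : σ.Ext C A) :
    σ.pull (c₁ ≫ c₂) δ = σ.pull c₁ (σ.pull c₂ δ) := by
  show (σ.E.map (c₁ ≫ c₂).op).app A δ = (σ.E.map c₁.op).app A ((σ.E.map c₂.op).app A δ)
  rw [op_comp, σ.E.map_comp]
  rfl

lemma push_comp {C A A' A'' : B} (a₁ : A ⟶ A') (a₂ : A' ⟶ A'') (δ : σ.Ext C A) :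
    σ.push (a₁ ≫ a₂) δ = σ.push a₂ (σ.push a₁ δ) := by
  show ((σ.E.obj (op C)).map (a₁ ≫ a₂)) δ = _
  rw [CategoryTheory.Functor.map_comp]
  rfl

lemma pull_id {C A : B} (δ : σ.Ext C A) : σ.pull (𝟙 C) δ = δ := by
  show (σ.E.map (𝟙 C).op).app A δ = δ
  rw [op_id, σ.E.map_id]
  rfl

lemma push_id {C A : B} (δ : σ.Ext C A) : σ.push (𝟙 A) δ = δ := by
  show ((σ.E.obj (op C)).map (𝟙 A)) δ = δ
  rw [CategoryTheory.Functor.map_id]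
  rfl

lemma push_pull {C' C A A' : B} (c : C' ⟶ C) (a : A ⟶ A') (δ : σ.Ext C A) :
    σ.push a (σ.pull c δ) = σ.pull c (σ.push a δ) := by
  have h2 := ConcreteCategory.congr_hom ((σ.E.map c.op).naturality a) δ
  simp only [CategoryTheory.comp_apply] at h2
  exact h2.symm

lemma push_zero {C A A' : B} (a : A ⟶ A') : σ.push a (0 : σ.Ext C A) = 0 :=
  map_zero _

lemma pull_zero {C' C A : B} (c : C' ⟶ C) : σ.pull c (0 : σ.Ext C A) = 0 :=
  map_zero _

lemma pull_zero_mor {C' C A : B} (δ : σ.Ext C A) : σ.pull (0 : C' ⟶ C) δ = 0 := by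
  letI := σ.additive_snd A
  show (σ.E.flip.obj A).map (0 : C' ⟶ C).op δ = 0
  have : ((0 : C' ⟶ C).op : op C ⟶ op C') = 0 := rfl
  rw [this, Functor.map_zero]
  rfl

lemma pull_add_mor {C' C A : B} (c₁ c₂ : C' ⟶ C) (δ : σ.Ext C A) :
    σ.pull (c₁ + c₂) δ = σ.pull c₁ δ + σ.pull c₂ δ := by
  letI := σ.additive_snd A
  show (σ.E.flip.obj A).map (c₁ + c₂).op δ = (σ.E.flip.obj A).map c₁.op δ + (σ.E.flip.obj A).map c₂.op δ
  have : ((c₁ + c₂).op : op C ⟶ op C') = c₁.op + c₂.op := rfl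
  rw [this, Functor.map_add]
  rfl

lemma pull_neg_mor {C' C A : B} (c : C' ⟶ C) (δ : σ.Ext C A) :
    σ.pull (-c) δ = -σ.pull c δ := by
  letI := σ.additive_snd A
  show (σ.E.flip.obj A).map (-c).op δ = -((σ.E.flip.obj A).map c.op δ)
  have : ((-c).op : op C ⟶ op C') = -c.op := rfl
  rw [this, Functor.map_neg]
  rfl

lemma pull_sub_mor {C' C A : B} (c₁ c₂ : C' ⟶ C) (δ : σ.Ext C A) :
    σ.pull (c₁ - c₂) δ = σ.pull c₁ δ - σ.pull c₂ δ := by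
  rw [sub_eq_add_neg, pull_add_mor, pull_neg_mor, sub_eq_add_neg]

/-! ### Split conflations -/

lemma split_of_realize_zero {A C X : B} {x : A ⟶ X} {y : X ⟶ C}
    (h : σ.realize (0 : σ.Ext C A) x y) :
    ∃ b : X ≅ A ⊞ C, x ≫ b.hom = biprod.inl ∧ b.hom ≫ biprod.snd = y :=
  σ.realize_unique 0 x y _ _ h (σ.realize_zero A C)

/-! ### Elementary consequences of the axioms -/

lemma realize_comp_zero {A C X : B} {δ : σ.Ext C A} {x : A ⟶ X} {y : X ⟶ C}
    (h : σ.realize δ x y) : x ≫ y = 0 := by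
  obtain ⟨a, _, ha⟩ := σ.et3op δ (0 : σ.Ext C A) x y biprod.inl biprod.snd h
    (σ.realize_zero A C) (biprod.lift 0 y) (𝟙 C) (by simp)
  have := congrArg (· ≫ biprod.snd) ha
  simpa using this

lemma push_infl_zero {A C X : B} {δ : σ.Ext C A} {x : A ⟶ X} {y : X ⟶ C}
    (h : σ.realize δ x y) : σ.push x δ = 0 := by
  obtain ⟨c, hc, _⟩ := σ.et3 δ (0 : σ.Ext C X) x y biprod.inl biprod.snd h
    (σ.realize_zero X C) x biprod.inl rfl
  rw [hc, σ.pull_zero]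

lemma realize_id_zeroobj (Q : B) {Z : B} (hZ : IsZero Z) :
    σ.realize (0 : σ.Ext Z Q) (𝟙 Q) (0 : Q ⟶ Z) := by
  have hcomp : biprod.fst ≫ biprod.inl = 𝟙 (Q ⊞ Z) := by
    apply biprod.hom_ext'
    · simp
    · exact hZ.eq_of_src _ _
  have h := σ.realize_iso 0 biprod.inl biprod.snd
    ⟨biprod.fst, biprod.inl, hcomp, by simp⟩ (σ.realize_zero Q Z)
  simpa using h

lemma realize_zeroobj_id (Q : B) {Z : B} (hZ : IsZero Z) :
    σ.realize (0 : σ.Ext Q Z) (0 : Z ⟶ Q) (𝟙 Q) := by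
  have hcomp : biprod.snd ≫ biprod.inr = 𝟙 (Z ⊞ Q) := by
    apply biprod.hom_ext'
    · exact hZ.eq_of_src _ _
    · simp
  have h := σ.realize_iso 0 biprod.inl biprod.snd
    ⟨biprod.snd, biprod.inr, hcomp, by simp⟩ (σ.realize_zero Z Q)
  simpa using h

lemma weak_kernel {A C X Q : B} {δ : σ.Ext C A} {x : A ⟶ X} {y : X ⟶ C}
    (h : σ.realize δ x y) (η : Q ⟶ X) (hη : η ≫ y = 0) :
    ∃ ζ : Q ⟶ A, ζ ≫ x = η := by
  obtain ⟨Z, hZ⟩ := HasZeroObject.zero (C := B)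
  obtain ⟨a, _, ha⟩ := σ.et3op (0 : σ.Ext Z Q) δ (𝟙 Q) (0 : Q ⟶ Z) x y
    (σ.realize_id_zeroobj Q hZ) h η (0 : Z ⟶ C) (by rw [zero_comp, hη])
  exact ⟨a, by simpa using ha.symm⟩

lemma extend_of_push_zero {A C X Q : B} {δ : σ.Ext C A} {x : A ⟶ X} {y : X ⟶ C}
    (h : σ.realize δ x y) (ρ : A ⟶ Q) (hρ : σ.push ρ δ = 0) :
    ∃ τ : X ⟶ Q, x ≫ τ = ρ := by
  obtain ⟨b, hb1, _⟩ := σ.realize_map δ (0 : σ.Ext C Q) x y biprod.inl biprod.snd ρ (𝟙 C)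
    h (σ.realize_zero Q C) (by rw [hρ, σ.pull_zero])
  refine ⟨b ≫ biprod.fst, ?_⟩
  rw [← Category.assoc, hb1]
  simp

lemma lift_of_pull_zero {A C X Q : B} {δ : σ.Ext C A} {x : A ⟶ X} {y : X ⟶ C}
    (h : σ.realize δ x y) (ζ : Q ⟶ C) (hζ : σ.pull ζ δ = 0) :
    ∃ ξ : Q ⟶ X, ξ ≫ y = ζ := by
  obtain ⟨b, _, hb2⟩ := σ.realize_map (0 : σ.Ext Q A) δ biprod.inl biprod.snd x y (𝟙 A) ζ
    (σ.realize_zero A Q) h (by rw [σ.push_id, hζ])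
  refine ⟨biprod.inr ≫ b, ?_⟩
  rw [Category.assoc, ← hb2]
  simp

lemma exists_lift_ext {A X P Q : B} {π : σ.Ext P A} {φ : A ⟶ X} {hφ : X ⟶ P}
    (h : σ.realize π φ hφ) (ε : σ.Ext Q A) (hε : σ.push φ ε = 0) :
    ∃ ζ : Q ⟶ P, ε = σ.pull ζ π := by
  obtain ⟨Mε, mε, kε, hM⟩ := σ.realize_ex ε
  obtain ⟨b, hb1, _⟩ := σ.realize_map ε (0 : σ.Ext Q X) mε kε biprod.inl biprod.snd φ (𝟙 Q)
    hM (σ.realize_zero X Q) (by rw [hε, σ.pull_zero])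
  obtain ⟨ζ, hζ1, _⟩ := σ.et3 ε π mε kε φ hφ hM h (𝟙 A) (b ≫ biprod.fst)
    (by rw [← Category.assoc, hb1]; simp)
  refine ⟨ζ, ?_⟩
  rw [← hζ1, σ.push_id]

/-! ### Exactness at the middle term -/

lemma exact_first {A X C Q : B} {δ : σ.Ext C A} {x : A ⟶ X} {y : X ⟶ C}
    (h : σ.realize δ x y) (γ : σ.Ext X Q) (hγ : σ.pull x γ = 0) :
    ∃ γ' : σ.Ext C Q, γ = σ.pull y γ' := by
  obtain ⟨Mγ, mγ, kγ, hM⟩ := σ.realize_ex γ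
  obtain ⟨N, e, d, m, δ'', _, _, _, hr2, _, hp2⟩ := σ.et4op γ mγ kγ δ x y hM h
  rw [hγ] at hr2
  obtain ⟨b, hb1, _⟩ := σ.split_of_realize_zero hr2
  have hr : e ≫ (b.hom ≫ biprod.fst) = 𝟙 Q := by
    rw [← Category.assoc, hb1]; simp
  refine ⟨σ.push (b.hom ≫ biprod.fst) δ'', ?_⟩
  calc γ = σ.push (𝟙 Q) γ := (σ.push_id γ).symm
    _ = σ.push (e ≫ (b.hom ≫ biprod.fst)) γ := by rw [hr]
    _ = σ.push (b.hom ≫ biprod.fst) (σ.push e γ) := σ.push_comp _ _ _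
    _ = σ.push (b.hom ≫ biprod.fst) (σ.pull y δ'') := by rw [← hp2]
    _ = σ.pull y (σ.push (b.hom ≫ biprod.fst) δ'') := σ.push_pull _ _ _

lemma exact_second {A X C Q : B} {δ : σ.Ext C A} {x : A ⟶ X} {y : X ⟶ C}
    (h : σ.realize δ x y) (γ : σ.Ext Q X) (hγ : σ.push y γ = 0) :
    ∃ γ' : σ.Ext Q A, γ = σ.push x γ' := by
  obtain ⟨Mγ, mγ, kγ, hM⟩ := σ.realize_ex γ
  obtain ⟨N, d, e, h', δ'', _, _, _, hr2, _, hp2⟩ := σ.et4 δ x y γ mγ kγ h hM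
  rw [hγ] at hr2
  obtain ⟨b, hb1, hb2⟩ := σ.split_of_realize_zero hr2
  have hs : (biprod.inr ≫ b.inv) ≫ e = 𝟙 Q := by
    rw [← hb2, ← Category.assoc, Category.assoc biprod.inr b.inv b.hom, b.inv_hom_id,
      Category.comp_id]
    simp
  refine ⟨σ.pull (biprod.inr ≫ b.inv) δ'', ?_⟩
  calc γ = σ.pull (𝟙 Q) γ := (σ.pull_id γ).symm
    _ = σ.pull ((biprod.inr ≫ b.inv) ≫ e) γ := by rw [hs]
    _ = σ.pull (biprod.inr ≫ b.inv) (σ.pull e γ) := σ.pull_comp _ _ _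
    _ = σ.pull (biprod.inr ≫ b.inv) (σ.push x δ'') := by rw [← hp2]
    _ = σ.push x (σ.pull (biprod.inr ≫ b.inv) δ'') := (σ.push_pull _ _ _).symm

/-! ### Membership criteria for `U` and `V` -/

variable {U V : Set B}

lemma mem_U_of_ext_vanish (cp : σ.IsCotorsionPair U V) {X : B}
    (h : ∀ Vt ∈ V, ∀ δ : σ.Ext X Vt, δ = 0) : X ∈ U := by
  obtain ⟨Vx, Ux, fx, gx, hVx, hUx, ⟨δx, hδx⟩⟩ := cp.resolve X
  rw [h Vx hVx δx] at hδx
  obtain ⟨b, _, hb2⟩ := σ.split_of_realize_zero hδx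
  refine cp.addU.summand_mem X Ux hUx (biprod.inr ≫ b.inv) gx ?_
  rw [← hb2, ← Category.assoc, Category.assoc biprod.inr b.inv b.hom, b.inv_hom_id,
    Category.comp_id]
  simp

lemma mem_V_of_ext_vanish (cp : σ.IsCotorsionPair U V) {X : B}
    (h : ∀ Q ∈ U, ∀ δ : σ.Ext Q X, δ = 0) : X ∈ V := by
  obtain ⟨Vx, Ux, ix, px, hVx, hUx, ⟨δx, hδx⟩⟩ := cp.coresolve X
  rw [h Ux hUx δx] at hδx
  obtain ⟨b, hb1, _⟩ := σ.split_of_realize_zero hδx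
  refine cp.addV.summand_mem X Vx hVx ix (b.hom ≫ biprod.fst) ?_
  rw [← Category.assoc, hb1]
  simp

lemma mem_U_ext_closed (cp : σ.IsCotorsionPair U V) {A X C : B} {δ : σ.Ext C A}
    {x : A ⟶ X} {y : X ⟶ C} (h : σ.realize δ x y) (hAU : A ∈ U) (hCU : C ∈ U) : X ∈ U := by
  refine σ.mem_U_of_ext_vanish cp ?_
  intro Vt hVt γ
  obtain ⟨γ', hγ'⟩ := σ.exact_first h γ (cp.ext_vanish hAU hVt _)
  rw [hγ', cp.ext_vanish hCU hVt γ', σ.pull_zero]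

lemma mem_V_ext_closed (cp : σ.IsCotorsionPair U V) {A X C : B} {δ : σ.Ext C A}
    {x : A ⟶ X} {y : X ⟶ C} (h : σ.realize δ x y) (hAV : A ∈ V) (hCV : C ∈ V) : X ∈ V := by
  refine σ.mem_V_of_ext_vanish cp ?_
  intro Q hQ γ
  obtain ⟨γ', hγ'⟩ := σ.exact_second h γ (cp.ext_vanish hQ hCV _)
  rw [hγ', cp.ext_vanish hQ hAV γ', σ.push_zero]

/-! ### Membership in `B⁻` and `B⁺` -/

lemma mem_sNeg_of_UU (cp : σ.IsCotorsionPair U V) {Y P Z : B} {χ : σ.Ext Z Y}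
    {i : Y ⟶ P} {p : P ⟶ Z} (h : σ.realize χ i p) (hP : P ∈ U) (hZ : Z ∈ U) :
    Y ∈ σ.sNeg U V := by
  obtain ⟨Vc, Uc, cc, rc, hVc, hUc, ⟨κc, hκc⟩⟩ := cp.coresolve P
  have hVcU : Vc ∈ U := σ.mem_U_ext_closed cp hκc hP hUc
  obtain ⟨Q, dq, eq', hq, χ'', _, _, hr1, hr2, _, _⟩ := σ.et4 χ i p κc cc rc h hκc
  have hQ : Q ∈ U := σ.mem_U_ext_closed cp hr2 hZ hUc
  exact ⟨Vc, Q, i ≫ cc, hq, ⟨hVcU, hVc⟩, hQ, ⟨χ'', hr1⟩⟩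

lemma mem_sPos_of_VV (cp : σ.IsCotorsionPair U V) {V' Pv X : B} {χ : σ.Ext X V'}
    {i : V' ⟶ Pv} {p : Pv ⟶ X} (h : σ.realize χ i p) (hV' : V' ∈ V) (hPv : Pv ∈ V) :
    X ∈ σ.sPos U V := by
  obtain ⟨V₁, U₁, i', p', hV₁, hU₁, ⟨ηP, hηP⟩⟩ := cp.resolve Pv
  have hU₁V : U₁ ∈ V := σ.mem_V_ext_closed cp hηP hV₁ hPv
  obtain ⟨N, e₁, d₁, m₁, χ'', _, _, hr1, hr2, _, _⟩ := σ.et4op ηP i' p' χ i p hηP h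
  have hN : N ∈ V := σ.mem_V_ext_closed cp hr2 hV₁ hV'
  exact ⟨N, U₁, m₁, p' ≫ p, hN, ⟨hU₁, hU₁V⟩, ⟨χ'', hr1⟩⟩

/-! ### Graph conflations -/

lemma realize_graph {X W : B} (w : X ⟶ W) :
    σ.realize (0 : σ.Ext W X) (biprod.lift (𝟙 X) w) (biprod.snd - biprod.fst ≫ w) := by
  have h := σ.realize_iso 0 biprod.inl biprod.snd
    (⟨biprod.lift biprod.fst (biprod.fst ≫ w + biprod.snd),
      biprod.lift biprod.fst (biprod.snd - biprod.fst ≫ w),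
      by apply biprod.hom_ext <;> simp, by apply biprod.hom_ext <;> simp⟩ :
      X ⊞ W ≅ X ⊞ W) (σ.realize_zero X W)
  dsimp only at h
  have h1 : biprod.inl ≫ biprod.lift biprod.fst (biprod.fst ≫ w + biprod.snd)
      = biprod.lift (𝟙 X) w := by apply biprod.hom_ext <;> simp
  have h2 : biprod.lift biprod.fst (biprod.snd - biprod.fst ≫ w) ≫ biprod.snd
      = biprod.snd - biprod.fst ≫ w := by simp
  rwa [h1, h2] at h

lemma realize_graph' {X Y : B} (i : X ⟶ Y) :
    σ.realize (0 : σ.Ext Y X) (biprod.lift i (𝟙 X)) (biprod.fst - biprod.snd ≫ i) := by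
  have h := σ.realize_iso 0 biprod.inl biprod.snd
    (⟨biprod.lift (biprod.fst ≫ i + biprod.snd) biprod.fst,
      biprod.lift biprod.snd (biprod.fst - biprod.snd ≫ i),
      by apply biprod.hom_ext <;> simp, by apply biprod.hom_ext <;> simp⟩ :
      X ⊞ Y ≅ Y ⊞ X) (σ.realize_zero X Y)
  dsimp only at h
  have h1 : biprod.inl ≫ biprod.lift (biprod.fst ≫ i + biprod.snd) biprod.fst
      = biprod.lift i (𝟙 X) := by apply biprod.hom_ext <;> simp
  have h2 : biprod.lift biprod.snd (biprod.fst - biprod.snd ≫ i) ≫ biprod.snd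
      = biprod.fst - biprod.snd ≫ i := by simp
  rwa [h1, h2] at h

/-! ### Uniqueness of cokernels of inflations -/

lemma cokernel_iso {A X P P' : B} {π : σ.Ext P A} {π' : σ.Ext P' A} {φ : A ⟶ X}
    {h : X ⟶ P} {h' : X ⟶ P'} (hr : σ.realize π φ h) (hr' : σ.realize π' φ h') :
    ∃ c : P ⟶ P', IsIso c := by
  obtain ⟨c, hc1, hc2⟩ := σ.et3 π π' φ h φ h' hr hr' (𝟙 A) (𝟙 X) (by simp)
  rw [σ.push_id] at hc1
  rw [Category.id_comp] at hc2
  have surj : ∀ {Q : B} (ζ' : Q ⟶ P'), ∃ ζ : Q ⟶ P, ζ ≫ c = ζ' := by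
    intro Q ζ'
    have hε : σ.push φ (σ.pull ζ' π') = 0 := by
      rw [σ.push_pull, σ.push_infl_zero hr', σ.pull_zero]
    obtain ⟨ζ₀, hζ₀⟩ := σ.exists_lift_ext hr (σ.pull ζ' π') hε
    have hz : σ.pull (ζ₀ ≫ c - ζ') π' = 0 := by
      rw [σ.pull_sub_mor, σ.pull_comp, ← hc1, ← hζ₀, sub_self]
    obtain ⟨ξ, hξ⟩ := σ.lift_of_pull_zero hr' (ζ₀ ≫ c - ζ') hz
    refine ⟨ζ₀ - ξ ≫ h, ?_⟩
    rw [Preadditive.sub_comp, Category.assoc, hc2, hξ]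
    abel
  have inj : ∀ {Q : B} (ζ : Q ⟶ P), ζ ≫ c = 0 → ζ = 0 := by
    intro Q ζ hzc
    have h1 : σ.pull ζ π = 0 := by
      rw [hc1, ← σ.pull_comp, hzc, σ.pull_zero_mor]
    obtain ⟨ξ, hξ⟩ := σ.lift_of_pull_zero hr ζ h1
    have h2 : ξ ≫ h' = 0 := by
      rw [← hc2, ← Category.assoc, hξ, hzc]
    obtain ⟨ζ₂, hζ₂⟩ := σ.weak_kernel hr' ξ h2
    rw [← hξ, ← hζ₂, Category.assoc, σ.realize_comp_zero hr, comp_zero]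
  obtain ⟨χ, hχ⟩ := surj (𝟙 P')
  have h0 : (c ≫ χ - 𝟙 P) ≫ c = 0 := by
    rw [Preadditive.sub_comp, Category.assoc, hχ, Category.comp_id, Category.id_comp,
      sub_self]
  have hcχ : c ≫ χ = 𝟙 P := by
    have := inj _ h0
    rwa [sub_eq_zero] at this
  exact ⟨c, ⟨χ, hcχ, hχ⟩⟩

/-! ### `B⁻` is stable under extensions with cokernel in `U` -/

lemma sNeg_ext_U (cp : σ.IsCotorsionPair U V) {X Y Z : B} {θ : σ.Ext Z X}
    {i : X ⟶ Y} {p : Y ⟶ Z} (h : σ.realize θ i p) (hX : X ∈ σ.sNeg U V) (hZ : Z ∈ U) :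
    Y ∈ σ.sNeg U V := by
  obtain ⟨Wx, Ux, w, u, hWx, hUx, ⟨ψ, hψ⟩⟩ := hX
  obtain ⟨Z₀, hZ₀⟩ := HasZeroObject.zero (C := B)
  -- decomposition A
  have hA1 := σ.realize_graph w
  have hA2 := σ.realize_sum θ (0 : σ.Ext Z₀ Wx) i p (𝟙 Wx) (0 : Wx ⟶ Z₀) h
    (σ.realize_id_zeroobj Wx hZ₀)
  obtain ⟨P, dP, eP, hP, π, _, _, hπr, hPr2, _, _⟩ :=
    σ.et4 (0 : σ.Ext Wx X) (biprod.lift (𝟙 X) w) (biprod.snd - biprod.fst ≫ w)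
      (σ.sumExt θ 0) (biprod.map i (𝟙 Wx)) (biprod.map p (0 : Wx ⟶ Z₀)) hA1 hA2
  have hφA : biprod.lift (𝟙 X) w ≫ biprod.map i (𝟙 Wx) = biprod.lift i w := by
    apply biprod.hom_ext <;> simp
  rw [hφA] at hπr
  have hPU : P ∈ U := by
    refine σ.mem_U_of_ext_vanish cp ?_
    intro Vt hVt γ
    obtain ⟨γ', hγ'⟩ := σ.exact_first hPr2 γ (cp.ext_vanish hWx.1 hVt _)
    rw [hγ', cp.ext_vanish (cp.addU.biprod_mem _ _ hZ (cp.addU.zero_mem _ hZ₀)) hVt γ',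
      σ.pull_zero]
  -- decomposition B
  have hB1 := σ.realize_graph' i
  have hB2 := σ.realize_sum (0 : σ.Ext Z₀ Y) ψ (𝟙 Y) (0 : Y ⟶ Z₀) w u
    (σ.realize_id_zeroobj Y hZ₀) hψ
  obtain ⟨P', dP', eP', hP', π', _, _, hπ'r, hP'r2, _, _⟩ :=
    σ.et4 (0 : σ.Ext Y X) (biprod.lift i (𝟙 X)) (biprod.fst - biprod.snd ≫ i)
      (σ.sumExt 0 ψ) (biprod.map (𝟙 Y) w) (biprod.map (0 : Y ⟶ Z₀) u) hB1 hB2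
  have hφB : biprod.lift i (𝟙 X) ≫ biprod.map (𝟙 Y) w = biprod.lift i w := by
    apply biprod.hom_ext <;> simp
  rw [hφB] at hπ'r
  obtain ⟨c, hc⟩ := σ.cokernel_iso hπr hπ'r
  have hP'U : P' ∈ U := cp.addU.summand_mem P' P hPU (inv c) c (by simp)
  exact σ.mem_sNeg_of_UU cp hP'r2 hP'U
    (cp.addU.biprod_mem _ _ (cp.addU.zero_mem _ hZ₀) hUx)

end ExtStruct

end Statement9Aux

/-- Lemma 3.1 / `C17`. Let `(U,V)` be a cotorsion pair, `A₀, B₀ ∈ H`, and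
`C₀ ↣ A₀ --f--> B₀` a conflation in `B`.  If the image `f̄` of the deflation `f` is an
epimorphism in the heart `H̄`, then `C₀ ∈ B⁻`. -/
theorem statement_9 {B : Type u} [Category.{v} B] [Preadditive B] [HasFiniteBiproducts B]
    (σ : ExtStruct B) {U V : Set B} (cp : σ.IsCotorsionPair U V)
    {C₀ A₀ B₀ : B} (g : C₀ ⟶ A₀) (f : A₀ ⟶ B₀) (hconf : σ.Conflation g f)
    (hA : A₀ ∈ σ.sHeartSet U V) (hB : B₀ ∈ σ.sHeartSet U V)
    (hepi : Epi (σ.sHeartHom U V hA hB f)) :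
    C₀ ∈ σ.sNeg U V := by
  obtain ⟨δ, hδ⟩ := hconf
  obtain ⟨W_A, U_A, a, b, hWA, hUA, hconfA⟩ := hA.2
  obtain ⟨ε, hε⟩ := hconfA
  obtain ⟨E₀, d, e, h', δ'', hq1, hq2, h3, h4, h5, h6⟩ := σ.et4 δ g f ε a b hδ hε
  have hE₀ : E₀ ∈ U := by
    refine σ.mem_U_of_ext_vanish cp ?_
    intro Vt hVt δe
    have hγf : σ.pull f (σ.pull d δe) = 0 := by
      rw [← σ.pull_comp, ← hq1, σ.pull_comp, cp.ext_vanish hWA.1 hVt (σ.pull h' δe),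
        σ.pull_zero]
    have hγ0 : σ.pull d δe = 0 := by
      obtain ⟨M, m, k, hM⟩ := σ.realize_ex (σ.pull d δe)
      obtain ⟨h₀, hh₀⟩ := σ.lift_of_pull_zero hM f hγf
      obtain ⟨V_M, U_M, cM, rM, hVM, hUM, hconfM⟩ := cp.coresolve M
      obtain ⟨κM, hκM⟩ := hconfM
      obtain ⟨T, dt, et, ht, κ, k1, k2, k3, k4, k5, k6⟩ :=
        σ.et4 (σ.pull d δe) m k κM cM rM hM hκM
      have hT : T ∈ σ.sHeartSet U V :=
        ⟨σ.mem_sPos_of_VV cp k3 hVt hVM, σ.sNeg_ext_U cp k4 hB.2 hUM⟩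
      obtain ⟨τ, hτ⟩ := σ.extend_of_push_zero hε (h₀ ≫ cM) (cp.ext_vanish hUA hVM _)
      have hfd : f ≫ dt = a ≫ (τ ≫ ht) := by
        rw [← hh₀, Category.assoc, ← k1, ← Category.assoc, ← hτ, Category.assoc]
      have hmem : f ≫ dt ∈ wIdeal (U ∩ V : Set B) A₀ T := by
        rw [hfd]
        exact AddSubgroup.subset_closure ⟨W_A, hWA, a, τ ≫ ht, rfl⟩
      have hrel : (toQuot (U ∩ V : Set B)).map (f ≫ dt)
          = (toQuot (U ∩ V : Set B)).map (f ≫ (0 : B₀ ⟶ T)) := by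
        refine (Quotient.functor_map_eq_iff _ _ _).mpr ?_
        show (f ≫ dt) - (f ≫ 0) ∈ wIdeal (U ∩ V : Set B) A₀ T
        simpa using hmem
      have comp_eq : ∀ y : B₀ ⟶ T,
          σ.sHeartHom U V hA hB f ≫ σ.sHeartHom U V hB hT y
            = σ.sHeartHom U V hA hT (f ≫ y) := by
        intro y
        apply ObjectProperty.hom_ext
        show (toQuot (U ∩ V : Set B)).map f ≫ (toQuot (U ∩ V : Set B)).map y
          = (toQuot (U ∩ V : Set B)).map (f ≫ y)
        rw [Functor.map_comp]
      have heq : σ.sHeartHom U V hB hT dt = σ.sHeartHom U V hB hT 0 := by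
        refine (cancel_epi (σ.sHeartHom U V hA hB f)).mp ?_
        rw [comp_eq, comp_eq]
        exact ObjectProperty.hom_ext _ hrel
      have hwrel : wRel (U ∩ V : Set B) dt (0 : B₀ ⟶ T) :=
        (Quotient.functor_map_eq_iff _ _ _).mp (by have := congrArg (fun φ => φ.hom) heq; exact this)
      have hdtmem : dt ∈ AddSubgroup.closure
          {f : B₀ ⟶ T | ∃ Z ∈ (U ∩ V : Set B), ∃ p : B₀ ⟶ Z, ∃ q : Z ⟶ T, f = p ≫ q} := by
        have : dt - 0 ∈ wIdeal (U ∩ V : Set B) B₀ T := hwrel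
        simpa [wIdeal] using this
      rw [← k5]
      refine AddSubgroup.closure_induction ?_ ?_ ?_ ?_ hdtmem
      · rintro x ⟨Z, hZ, p, q, rfl⟩
        rw [σ.pull_comp, cp.ext_vanish hZ.1 hVt (σ.pull q κ), σ.pull_zero]
      · exact σ.pull_zero_mor κ
      · intro x y _ _ hx hy
        rw [σ.pull_add_mor, hx, hy, add_zero]
      · intro x _ hx
        rw [σ.pull_neg_mor, hx, neg_zero]
    obtain ⟨δ₁, hδ₁⟩ := σ.exact_first h4 δe hγ0
    rw [hδ₁, cp.ext_vanish hUA hVt δ₁, σ.pull_zero]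
  exact ⟨W_A, E₀, g ≫ a, h', hWA, hE₀, ⟨δ'', h3⟩⟩

end ExtriHearts
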